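/- Fix y > 1 and suppose B is a real-valued function, differentiable on a neighborhood of 1, with B(1) = y and satisfying φ←(B(x)) + xy·φ←(B(x)/(xy)) = φ←(x) + x·φ←(y) for all x in that neighborhood. Then B'(1) = (φ←(y) + κ(y+1))/(φ←'(y) + κ). -/

import Mathlib

open Real Set Filter Topology

/-- κ = √γ / α with α = (γ-1)/2. -/
noncomputable def kappa (γ : ℝ) : ℝ := Real.sqrt γ / ((γ - 1) / 2)

/-- The shock branch x ↦ √((1 - x^{-1/α})(x^{γ/α} - 1)), α = (γ-1)/2. -/
noncomputable def shockPart (γ : ℝ) (x : ℝ) : ℝ :=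
  Real.sqrt ((1 - x ^ (-(1 : ℝ) / ((γ - 1) / 2))) * (x ^ (γ / ((γ - 1) / 2)) - 1))

/-- Backward auxiliary function φ← : rarefaction branch κ(x-1) for x ≤ 1,
    shock branch for x ≥ 1 (they agree, with value 0, at x = 1). -/
noncomputable def phiB (γ : ℝ) (x : ℝ) : ℝ :=
  if x ≤ 1 then kappa γ * (x - 1) else shockPart γ x

/-- Forward auxiliary function φ→ : shock branch -√(...) for x ≤ 1,
    rarefaction branch κ(x-1) for x ≥ 1 (they agree, with value 0, at x = 1). -/
noncomputable def phiF (γ : ℝ) (x : ℝ) : ℝ :=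
  if x < 1 then -shockPart γ x else kappa γ * (x - 1)

lemma kappa_pos {γ : ℝ} (hγ : 1 < γ) : 0 < kappa γ :=
  div_pos (Real.sqrt_pos.2 (by linarith)) (by linarith)

lemma phiB_one (γ : ℝ) : phiB γ 1 = 0 := by simp [phiB]

lemma exp_neg {γ : ℝ} (hγ : 1 < γ) : -(1 : ℝ) / ((γ - 1) / 2) ≤ 0 := by
  apply div_nonpos_of_nonpos_of_nonneg <;> linarith

lemma exp_pos' {γ : ℝ} (hγ : 1 < γ) : 0 ≤ γ / ((γ - 1) / 2) := by
  apply div_nonneg <;> linarith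

/-- The shock branch is monotone on `[1, ∞)`. -/
lemma shockPart_mono {γ : ℝ} (hγ : 1 < γ) : MonotoneOn (shockPart γ) (Ici 1) := by
  intro a ha b hb hab
  have ha1 : (1 : ℝ) ≤ a := ha
  have hb1 : (1 : ℝ) ≤ b := hb
  unfold shockPart
  apply Real.sqrt_le_sqrt
  have h1 : b ^ (-(1 : ℝ) / ((γ - 1) / 2)) ≤ a ^ (-(1 : ℝ) / ((γ - 1) / 2)) :=
    Real.rpow_le_rpow_of_nonpos (by linarith) hab (exp_neg hγ)
  have h2 : a ^ (γ / ((γ - 1) / 2)) ≤ b ^ (γ / ((γ - 1) / 2)) :=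
    Real.rpow_le_rpow (by linarith) hab (exp_pos' hγ)
  have h3 : 1 ≤ a ^ (γ / ((γ - 1) / 2)) := Real.one_le_rpow ha1 (exp_pos' hγ)
  have h4 : b ^ (-(1 : ℝ) / ((γ - 1) / 2)) ≤ 1 :=
    Real.rpow_le_one_of_one_le_of_nonpos hb1 (exp_neg hγ)
  nlinarith

/-- φ← near a point `y > 1` agrees with the shock branch. -/
lemma phiB_eventuallyEq {γ y : ℝ} (hy : 1 < y) : phiB γ =ᶠ[𝓝 y] shockPart γ := by
  filter_upwards [Ioi_mem_nhds hy] with z hz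
  simp [phiB, not_le.2 (show (1 : ℝ) < z from hz)]

lemma differentiableAt_phiB {γ y : ℝ} (hγ : 1 < γ) (hy : 1 < y) :
    DifferentiableAt ℝ (phiB γ) y := by
  have hy0 : y ≠ 0 := by linarith
  have hinner : DifferentiableAt ℝ
      (fun x : ℝ => (1 - x ^ (-(1 : ℝ) / ((γ - 1) / 2))) * (x ^ (γ / ((γ - 1) / 2)) - 1)) y := by
    have d1 : DifferentiableAt ℝ (fun x : ℝ => x ^ (-(1 : ℝ) / ((γ - 1) / 2))) y :=
      (Real.hasDerivAt_rpow_const (Or.inl hy0)).differentiableAt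
    have d2 : DifferentiableAt ℝ (fun x : ℝ => x ^ (γ / ((γ - 1) / 2))) y :=
      (Real.hasDerivAt_rpow_const (Or.inl hy0)).differentiableAt
    exact ((differentiableAt_const _).sub d1).mul (d2.sub (differentiableAt_const _))
  have hne : (1 - y ^ (-(1 : ℝ) / ((γ - 1) / 2))) * (y ^ (γ / ((γ - 1) / 2)) - 1) ≠ 0 := by
    have h1 : y ^ (-(1 : ℝ) / ((γ - 1) / 2)) < 1 := by
      apply Real.rpow_lt_one_of_one_lt_of_neg hy
      have : (0:ℝ) < (γ - 1) / 2 := by linarith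
      apply div_neg_of_neg_of_pos <;> linarith
    have h2 : 1 < y ^ (γ / ((γ - 1) / 2)) := by
      have h := Real.rpow_lt_rpow_of_exponent_lt hy
        (show (0:ℝ) < γ / ((γ - 1) / 2) from by apply div_pos <;> linarith)
      rwa [Real.rpow_zero] at h
    exact ne_of_gt (mul_pos (by linarith) (by linarith))
  have : DifferentiableAt ℝ (shockPart γ) y := hinner.sqrt hne
  exact this.congr_of_eventuallyEq (phiB_eventuallyEq hy)

/-- φ← has derivative κ at 1. -/
lemma hasDerivAt_phiB_one {γ : ℝ} (hγ : 1 < γ) : HasDerivAt (phiB γ) (kappa γ) 1 := by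
  have hα : (0 : ℝ) < (γ - 1) / 2 := by linarith
  rw [hasDerivAt_iff_tendsto_slope, ← nhdsLT_sup_nhdsGT, tendsto_sup]
  constructor
  · -- left of 1: linear branch with slope κ
    apply Tendsto.congr' _ tendsto_const_nhds
    filter_upwards [self_mem_nhdsWithin] with z hz
    have hz1 : z < 1 := hz
    rw [slope_def_field, phiB_one]
    simp only [phiB, if_pos hz1.le]
    rw [sub_zero, mul_div_assoc, div_self (sub_ne_zero.2 hz1.ne), mul_one]
  · -- right of 1: shock branch
    have hf : HasDerivAt (fun x : ℝ => 1 - x ^ (-(1 : ℝ) / ((γ - 1) / 2)))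
        (1 / ((γ - 1) / 2)) 1 := by
      have h := Real.hasDerivAt_rpow_const (x := (1:ℝ)) (p := -(1 : ℝ) / ((γ - 1) / 2))
        (Or.inl one_ne_zero)
      have h2 := (hasDerivAt_const (1 : ℝ) (1 : ℝ)).sub h
      refine h2.congr_deriv ?_
      rw [Real.one_rpow]
      ring
    have hg : HasDerivAt (fun x : ℝ => x ^ (γ / ((γ - 1) / 2)) - 1)
        (γ / ((γ - 1) / 2)) 1 := by
      have h := Real.hasDerivAt_rpow_const (x := (1:ℝ)) (p := γ / ((γ - 1) / 2))
        (Or.inl one_ne_zero)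
      have h2 := h.sub (hasDerivAt_const (1 : ℝ) (1 : ℝ))
      refine h2.congr_deriv ?_
      rw [Real.one_rpow]
      ring
    have hmono : 𝓝[>] (1:ℝ) ≤ 𝓝[≠] (1:ℝ) :=
      nhdsWithin_mono _ fun z hz => ne_of_gt hz
    have hft := (hasDerivAt_iff_tendsto_slope.1 hf).mono_left hmono
    have hgt := (hasDerivAt_iff_tendsto_slope.1 hg).mono_left hmono
    have hprod := hft.mul hgt
    have hsq := (Real.continuous_sqrt.continuousAt
      (x := 1 / ((γ - 1) / 2) * (γ / ((γ - 1) / 2)))).tendsto.comp hprod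
    have hval : Real.sqrt (1 / ((γ - 1) / 2) * (γ / ((γ - 1) / 2))) = kappa γ := by
      have : 1 / ((γ - 1) / 2) * (γ / ((γ - 1) / 2)) = γ / ((γ - 1) / 2) ^ 2 := by
        field_simp
      rw [this, Real.sqrt_div (by linarith), Real.sqrt_sq hα.le, kappa]
    rw [hval] at hsq
    apply Tendsto.congr' _ hsq
    filter_upwards [self_mem_nhdsWithin] with z hz
    have hz1 : (1 : ℝ) < z := hz
    have hzpos : 0 < z - 1 := by linarith
    have hfz : 0 ≤ 1 - z ^ (-(1 : ℝ) / ((γ - 1) / 2)) := by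
      have := Real.rpow_le_one_of_one_le_of_nonpos hz1.le (exp_neg hγ)
      linarith
    have hgz : 0 ≤ z ^ (γ / ((γ - 1) / 2)) - 1 := by
      have := Real.one_le_rpow hz1.le (exp_pos' hγ)
      linarith
    simp only [Function.comp_apply, slope_def_field, phiB_one]
    simp only [phiB, if_neg (not_le.2 hz1), shockPart]
    rw [sub_zero]
    have key : (1 - z ^ (-(1 : ℝ) / ((γ - 1) / 2)) - (1 - 1 ^ (-(1 : ℝ) / ((γ - 1) / 2)))) / (z - 1)
        * ((z ^ (γ / ((γ - 1) / 2)) - 1 - (1 ^ (γ / ((γ - 1) / 2)) - 1)) / (z - 1))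
        = ((1 - z ^ (-(1 : ℝ) / ((γ - 1) / 2))) * (z ^ (γ / ((γ - 1) / 2)) - 1)) / (z - 1) ^ 2 := by
      rw [Real.one_rpow, Real.one_rpow, sub_self, sub_zero, sub_zero, div_mul_div_comm,
        ← pow_two]
    rw [key, Real.sqrt_div (by positivity), Real.sqrt_sq hzpos.le]

lemma deriv_phiB_nonneg {γ y : ℝ} (hγ : 1 < γ) (hy : 1 < y) : 0 ≤ deriv (phiB γ) y := by
  have hd := (differentiableAt_phiB hγ hy).hasDerivAt
  have ht := (hasDerivAt_iff_tendsto_slope.1 hd).mono_left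
    (nhdsWithin_mono _ fun z hz => ne_of_gt hz : 𝓝[>] y ≤ 𝓝[≠] y)
  refine ge_of_tendsto ht ?_
  filter_upwards [self_mem_nhdsWithin] with z hz
  have hzy : y < z := hz
  rw [slope_def_field]
  apply div_nonneg _ (by linarith)
  have hmono := shockPart_mono hγ (mem_Ici.2 hy.le) (mem_Ici.2 (by linarith : (1:ℝ) ≤ z)) hzy.le
  have e1 : phiB γ z = shockPart γ z := by
    simp [phiB, not_le.2 (show (1:ℝ) < z by linarith)]
  have e2 : phiB γ y = shockPart γ y := by simp [phiB, not_le.2 hy]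
  rw [e1, e2]; linarith

/-- derivative at x = 1 of the outgoing backward strength B(x)
    in an overtaking interaction with fixed second strength y > 1. -/
theorem deriv_outgoing_strength (γ : ℝ) (hγ : 1 < γ) (y : ℝ) (hy : 1 < y)
    (B : ℝ → ℝ) (s : Set ℝ) (hs : s ∈ nhds (1 : ℝ))
    (hdiff : ∀ x ∈ s, DifferentiableAt ℝ B x)
    (hB1 : B 1 = y)
    (heq : ∀ x ∈ s,
      phiB γ (B x) + x * y * phiB γ (B x / (x * y)) = phiB γ x + x * phiB γ y) :
    deriv B 1 = (phiB γ y + kappa γ * (y + 1)) / (deriv (phiB γ) y + kappa γ) := by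
  have hy0 : y ≠ 0 := by linarith
  set b := deriv B 1 with hb
  set D := deriv (phiB γ) y with hD
  set K := kappa γ with hK
  have hK0 : 0 < K := kappa_pos hγ
  have hD0 : 0 ≤ D := deriv_phiB_nonneg hγ hy
  have h1s : (1 : ℝ) ∈ s := mem_of_mem_nhds hs
  have hB : HasDerivAt B b 1 := (hdiff 1 h1s).hasDerivAt
  have hphi1 : HasDerivAt (phiB γ) K 1 := hasDerivAt_phiB_one hγ
  have hphiy : HasDerivAt (phiB γ) D (B 1) := by
    rw [hB1]; exact (differentiableAt_phiB hγ hy).hasDerivAt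
  -- first term
  have t1 : HasDerivAt (fun x => phiB γ (B x)) (D * b) 1 := hphiy.comp 1 hB
  -- inner function  B x / (x * y)
  have hxy : HasDerivAt (fun x : ℝ => x * y) y 1 := by
    simpa using (hasDerivAt_id (1:ℝ)).mul_const y
  have hinner : HasDerivAt (fun x => B x / (x * y)) ((b - y) / y) 1 := by
    have h := hB.div hxy (by simpa using hy0)
    refine h.congr_deriv ?_
    rw [hB1]
    field_simp
  have hval : B 1 / (1 * y) = 1 := by rw [hB1]; field_simp
  have hphi_inner : HasDerivAt (phiB γ) K (B 1 / (1 * y)) := by rw [hval]; exact hphi1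
  have t2' : HasDerivAt (fun x => phiB γ (B x / (x * y))) (K * ((b - y) / y)) 1 :=
    HasDerivAt.comp (h₂ := phiB γ) (h := fun x => B x / (x * y)) 1 hphi_inner hinner
  have t2 : HasDerivAt (fun x => x * y * phiB γ (B x / (x * y)))
      (y * phiB γ (B 1 / (1 * y)) + 1 * y * (K * ((b - y) / y))) 1 := hxy.mul t2'
  have hL : HasDerivAt (fun x => phiB γ (B x) + x * y * phiB γ (B x / (x * y)))
      (D * b + (y * phiB γ (B 1 / (1 * y)) + 1 * y * (K * ((b - y) / y)))) 1 := t1.add t2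
  have hR : HasDerivAt (fun x => phiB γ x + x * phiB γ y) (K + phiB γ y) 1 := by
    have h2 : HasDerivAt (fun x : ℝ => x * phiB γ y) (phiB γ y) 1 := by
      simpa using (hasDerivAt_id (1:ℝ)).mul_const (phiB γ y)
    exact hphi1.add h2
  have hEq : (fun x => phiB γ (B x) + x * y * phiB γ (B x / (x * y)))
      =ᶠ[𝓝 1] (fun x => phiB γ x + x * phiB γ y) :=
    eventuallyEq_of_mem hs heq
  have hL' : HasDerivAt (fun x => phiB γ (B x) + x * y * phiB γ (B x / (x * y)))
      (K + phiB γ y) 1 := hR.congr_of_eventuallyEq hEq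
  have hder : D * b + (y * phiB γ (B 1 / (1 * y)) + 1 * y * (K * ((b - y) / y)))
      = K + phiB γ y := hL.unique hL'
  rw [hval, phiB_one] at hder
  have hder' : D * b + K * (b - y) = K + phiB γ y := by
    have : 1 * y * (K * ((b - y) / y)) = K * (b - y) := by field_simp
    rw [this] at hder
    linarith
  have hne : D + K ≠ 0 := by positivity
  rw [eq_div_iff hne]
  nlinarith [hder']
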